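/- arXiv:1602.07216 — 4 statements merged into one kernel-verified Lean document; each statement's English description precedes it below -/
import Mathlib

section
/- Suppose ∫_V M(v)/(μ(p) − v·p) dv > 1 (where the integral may be +∞). Then there exists a unique H(p) > μ(p) − 1 such that ∫_V M(v)/(1 + H(p) − v·p) dv = 1. -/
set_option maxHeartbeats 1000000


open MeasureTheory Set Filter Topology
open scoped RealInnerProductSpace ENNReal

/-- If ∫_V M(v)/(μ(p) − v·p) dv > 1 (possibly +∞), there is a unique
H(p) > μ(p) − 1 with ∫_V M(v)/(1 + H(p) − v·p) dv = 1. -/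
theorem stmt_4 {n : ℕ} (V : Set (EuclideanSpace ℝ (Fin n)))
    (hVc : IsCompact V) (hVne : V.Nonempty)
    (h0 : (0 : EuclideanSpace ℝ (Fin n)) ∈ interior (convexHull ℝ V))
    (M : EuclideanSpace ℝ (Fin n) → ℝ)
    (hM0 : ∀ v, 0 ≤ M v) (hMsupp : Function.support M ⊆ V)
    (hMint : IntegrableOn M V) (hM1 : ∫ v in V, M v = 1)
    (μ : EuclideanSpace ℝ (Fin n) → ℝ)
    (hμ : ∀ p, IsGreatest ((fun v => ⟪v, p⟫) '' convexHull ℝ V) (μ p))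
    (p : EuclideanSpace ℝ (Fin n))
    (hp : 1 < ∫⁻ v in V, ENNReal.ofReal (M v) / ENNReal.ofReal (μ p - ⟪v, p⟫)) :
    ∃! H : ℝ, μ p - 1 < H ∧ ∫ v in V, M v / (1 + H - ⟪v, p⟫) = 1 := by
  have hVm : MeasurableSet V := hVc.measurableSet
  have hvp : ∀ v ∈ V, ⟪v, p⟫ ≤ μ p := fun v hv =>
    (hμ p).2 ⟨v, subset_convexHull ℝ V hv, rfl⟩
  have hcont : Continuous fun v : EuclideanSpace ℝ (Fin n) => ⟪v, p⟫ :=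
    continuous_id.inner continuous_const
  -- measurability of the integrand
  have hsm : ∀ H : ℝ, AEStronglyMeasurable (fun v => M v / (1 + H - ⟪v, p⟫))
      (volume.restrict V) := fun H =>
    (hMint.aestronglyMeasurable.aemeasurable.div
      (continuous_const.sub hcont).measurable.aemeasurable).aestronglyMeasurable
  -- pointwise bound
  have hb : ∀ {H : ℝ}, μ p - 1 < H → ∀ v ∈ V,
      ‖M v / (1 + H - ⟪v, p⟫)‖ ≤ (1 + H - μ p)⁻¹ * M v := by
    intro H hH v hv
    have hvb := hvp v hv
    have h1 : 0 < 1 + H - μ p := by linarith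
    have h2 : (1 : ℝ) + H - μ p ≤ 1 + H - ⟪v, p⟫ := by linarith
    rw [Real.norm_eq_abs, abs_of_nonneg (div_nonneg (hM0 v) (by linarith)),
      inv_mul_eq_div]
    gcongr
    exact hM0 v
  -- integrability of the integrand
  have hint : ∀ {H : ℝ}, μ p - 1 < H →
      IntegrableOn (fun v => M v / (1 + H - ⟪v, p⟫)) V := by
    intro H hH
    refine Integrable.mono (hMint.const_mul ((1 + H - μ p)⁻¹)) (hsm H) ?_
    filter_upwards [ae_restrict_mem hVm] with v hv
    exact (hb hH v hv).trans (le_abs_self _)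
  -- injectivity ("strict monotonicity")
  have hinj : ∀ {H₁ H₂ : ℝ}, μ p - 1 < H₁ → H₁ < H₂ →
      (∫ v in V, M v / (1 + H₁ - ⟪v, p⟫)) = 1 →
      (∫ v in V, M v / (1 + H₂ - ⟪v, p⟫)) = 1 → False := by
    intro H₁ H₂ h1 h12 e1 e2
    have h2 : μ p - 1 < H₂ := h1.trans h12
    have hi1 := hint h1
    have hi2 := hint h2
    have hzero : ∫ v in V,
        (M v / (1 + H₁ - ⟪v, p⟫) - M v / (1 + H₂ - ⟪v, p⟫)) = 0 := by
      rw [integral_sub hi1 hi2, e1, e2]; ring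
    have hnn : 0 ≤ᵐ[volume.restrict V]
        fun v => M v / (1 + H₁ - ⟪v, p⟫) - M v / (1 + H₂ - ⟪v, p⟫) := by
      filter_upwards [ae_restrict_mem hVm] with v hv
      have hvb := hvp v hv
      have d1 : 0 < 1 + H₁ - ⟪v, p⟫ := by linarith
      have hle : M v / (1 + H₂ - ⟪v, p⟫) ≤ M v / (1 + H₁ - ⟪v, p⟫) := by
        gcongr <;> first | exact hM0 v | linarith
      simpa using sub_nonneg.mpr hle
    have hae := (integral_eq_zero_iff_of_nonneg_ae hnn (hi1.sub hi2)).mp hzero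
    have hM0ae : M =ᵐ[volume.restrict V] 0 := by
      filter_upwards [hae, ae_restrict_mem hVm] with v hv hvV
      have hvb := hvp v hvV
      have d1 : 0 < 1 + H₁ - ⟪v, p⟫ := by linarith
      by_contra hM
      have hMpos : 0 < M v := lt_of_le_of_ne (hM0 v) (Ne.symm hM)
      have : M v / (1 + H₂ - ⟪v, p⟫) < M v / (1 + H₁ - ⟪v, p⟫) :=
        div_lt_div_of_pos_left hMpos d1 (by linarith)
      simp only [Pi.zero_apply] at hv
      have : M v / (1 + H₁ - ⟪v, p⟫) - M v / (1 + H₂ - ⟪v, p⟫) = 0 := hv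
      linarith
    have h10 : (1 : ℝ) = 0 := by
      rw [← hM1]
      exact integral_eq_zero_of_ae hM0ae
    norm_num at h10
  -- monotone convergence towards the singular integral
  have key : Tendsto (fun m : ℕ => ∫⁻ v in V,
      ENNReal.ofReal (M v) / ENNReal.ofReal (μ p - ⟪v, p⟫ + 1 / (m + 1))) atTop
      (𝓝 (∫⁻ v in V, ENNReal.ofReal (M v) / ENNReal.ofReal (μ p - ⟪v, p⟫))) := by
    apply lintegral_tendsto_of_tendsto_of_monotone
    · intro m
      exact (hMint.aestronglyMeasurable.aemeasurable.ennreal_ofReal).div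
        (((continuous_const.sub hcont).add continuous_const).measurable.ennreal_ofReal).aemeasurable
    · refine Eventually.of_forall fun v => ?_
      intro a b hab
      apply ENNReal.div_le_div_left
      apply ENNReal.ofReal_le_ofReal
      have hle : (1 : ℝ) / (b + 1) ≤ 1 / (a + 1) := by
        apply one_div_le_one_div_of_le
        · positivity
        · exact_mod_cast by exact_mod_cast add_le_add_left (Nat.cast_le.mpr hab) 1
      linarith
    · refine Eventually.of_forall fun v => ?_
      rcases eq_or_lt_of_le (hM0 v) with h0 | h0
      · simp [← h0]
      · have hden : Tendsto (fun m : ℕ =>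
            ENNReal.ofReal (μ p - ⟪v, p⟫ + 1 / (m + 1))) atTop
            (𝓝 (ENNReal.ofReal (μ p - ⟪v, p⟫))) := by
          apply ENNReal.tendsto_ofReal
          have := tendsto_one_div_add_atTop_nhds_zero_nat (𝕜 := ℝ)
          simpa using tendsto_const_nhds.add this
        refine ENNReal.Tendsto.div tendsto_const_nhds (Or.inl ?_) hden (Or.inl ?_)
        · simp [ENNReal.ofReal_eq_zero, not_le, h0]
        · exact ENNReal.ofReal_ne_top
  obtain ⟨m, hm⟩ := (key.eventually_const_lt hp).exists
  set H₀ : ℝ := μ p - 1 + 1 / (m + 1) with hH₀def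
  have hH₀gt : μ p - 1 < H₀ := by
    have : (0 : ℝ) < 1 / (m + 1) := by positivity
    simp only [hH₀def]; linarith
  -- value of φ at H₀ exceeds 1
  have hnn₀ : 0 ≤ᵐ[volume.restrict V] fun v => M v / (1 + H₀ - ⟪v, p⟫) := by
    filter_upwards [ae_restrict_mem hVm] with v hv
    have hvb := hvp v hv
    exact div_nonneg (hM0 v) (by linarith)
  have hLeq : (∫⁻ v in V, ENNReal.ofReal (M v) /
      ENNReal.ofReal (μ p - ⟪v, p⟫ + 1 / (m + 1))) =
      ∫⁻ v in V, ENNReal.ofReal (M v / (1 + H₀ - ⟪v, p⟫)) := by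
    apply lintegral_congr_ae
    filter_upwards [ae_restrict_mem hVm] with v hv
    have hvb := hvp v hv
    have hd : (0 : ℝ) < 1 + H₀ - ⟪v, p⟫ := by linarith
    rw [ENNReal.ofReal_div_of_pos hd]
    congr 2
    simp only [hH₀def]; ring
  have hfin : (∫⁻ v in V, ENNReal.ofReal (M v) /
      ENNReal.ofReal (μ p - ⟪v, p⟫ + 1 / (m + 1))) ≠ ⊤ := by
    rw [hLeq]
    exact (Integrable.lintegral_lt_top (hint hH₀gt)).ne
  have hφ₀ : 1 < ∫ v in V, M v / (1 + H₀ - ⟪v, p⟫) := by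
    rw [integral_eq_lintegral_of_nonneg_ae hnn₀ (hsm H₀), ← hLeq]
    have := (ENNReal.toReal_lt_toReal (by simp) hfin).mpr hm
    simpa using this
  -- the value at H₁ is at most 1/2
  set H₁ : ℝ := max H₀ (μ p + 1) with hH₁def
  have hH₀₁ : H₀ ≤ H₁ := le_max_left _ _
  have hH₁gt : μ p - 1 < H₁ := lt_of_lt_of_le hH₀gt hH₀₁
  have hφ₁ : (∫ v in V, M v / (1 + H₁ - ⟪v, p⟫)) ≤ 2⁻¹ := by
    have h2 : (2 : ℝ) ≤ 1 + H₁ - μ p := by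
      have := le_max_right H₀ (μ p + 1); simp only [hH₁def]; linarith
    calc (∫ v in V, M v / (1 + H₁ - ⟪v, p⟫))
        ≤ ∫ v in V, (1 + H₁ - μ p)⁻¹ * M v := by
          refine setIntegral_mono_on (hint hH₁gt) (hMint.const_mul _) hVm ?_
          intro v hv
          exact (le_abs_self _).trans (hb hH₁gt v hv)
      _ = (1 + H₁ - μ p)⁻¹ * ∫ v in V, M v := integral_const_mul _ _
      _ = (1 + H₁ - μ p)⁻¹ := by rw [hM1, mul_one]
      _ ≤ 2⁻¹ := by
          apply inv_anti₀
          · norm_num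
          · exact h2
  -- continuity on [H₀, H₁]
  have hcov : ContinuousOn (fun H => ∫ v in V, M v / (1 + H - ⟪v, p⟫))
      (Icc H₀ H₁) := by
    intro x hx
    have hxgt : μ p - 1 < x := lt_of_lt_of_le hH₀gt hx.1
    set c : ℝ := (μ p - 1 + x) / 2 with hcdef
    have hc1 : μ p - 1 < c := by simp only [hcdef]; linarith
    have hc2 : c < x := by simp only [hcdef]; linarith
    apply ContinuousAt.continuousWithinAt
    apply continuousAt_of_dominated (bound := fun v => (1 + c - μ p)⁻¹ * M v)
    · exact Eventually.of_forall fun H => hsm H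
    · filter_upwards [eventually_gt_nhds hc2] with H hH
      filter_upwards [ae_restrict_mem hVm] with v hv
      have hvb := hvp v hv
      have hd : (0 : ℝ) < 1 + c - μ p := by linarith
      rw [Real.norm_eq_abs, abs_of_nonneg (div_nonneg (hM0 v) (by linarith)),
        inv_mul_eq_div]
      gcongr <;> first | exact hM0 v | linarith
    · exact hMint.const_mul _
    · filter_upwards [ae_restrict_mem hVm] with v hv
      have hvb := hvp v hv
      have hd : (1 + x - ⟪v, p⟫) ≠ 0 := ne_of_gt (by linarith)
      exact continuousAt_const.div
        (((continuous_const.add continuous_id).sub continuous_const).continuousAt) hd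
  -- intermediate value theorem
  have hsub := intermediate_value_Icc' hH₀₁ hcov
  have h1mem : (1 : ℝ) ∈ Icc (∫ v in V, M v / (1 + H₁ - ⟪v, p⟫))
      (∫ v in V, M v / (1 + H₀ - ⟪v, p⟫)) := ⟨by linarith, le_of_lt hφ₀⟩
  obtain ⟨H, hHmem, hHeq⟩ := hsub h1mem
  refine ⟨H, ⟨lt_of_lt_of_le hH₀gt hHmem.1, hHeq⟩, ?_⟩
  rintro y ⟨hy1, hy2⟩
  by_contra hne
  rcases lt_or_gt_of_ne hne with h | h
  · exact hinj hy1 h hy2 hHeq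
  · exact hinj (lt_of_lt_of_le hH₀gt hHmem.1) h hHeq hy2
end

section
/- Suppose Q : V → ℝ is a positive integrable function and H ∈ ℝ satisfy H·Q(v) = (v·p − 1)·Q(v) + ∫_V M(v')Q(v') dv' for (almost) all v ∈ V, with ∫_V M Q dv > 0. Then H ≥ μ(p) − 1. -/
open MeasureTheory Set
open scoped RealInnerProductSpace

/-- If a positive integrable Q and H satisfy the eigenvalue relation
H·Q(v) = (v·p − 1)·Q(v) + ∫_V M Q a.e. on V, with ∫_V M Q > 0, then H ≥ μ(p) − 1.
(The essential support of M is V: every open set meeting V has positive measure in V.) -/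
theorem stmt_6 {n : ℕ} (V : Set (EuclideanSpace ℝ (Fin n)))
    (hVc : IsCompact V) (hVne : V.Nonempty)
    (h0 : (0 : EuclideanSpace ℝ (Fin n)) ∈ interior (convexHull ℝ V))
    (M : EuclideanSpace ℝ (Fin n) → ℝ)
    (hM0 : ∀ v, 0 ≤ M v) (hMsupp : Function.support M ⊆ V)
    (hMint : IntegrableOn M V)
    (hess : ∀ U : Set (EuclideanSpace ℝ (Fin n)), IsOpen U → (U ∩ V).Nonempty →
      0 < volume (U ∩ V))
    (μ : EuclideanSpace ℝ (Fin n) → ℝ)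
    (hμ : ∀ p, IsGreatest ((fun v => ⟪v, p⟫) '' convexHull ℝ V) (μ p))
    (p : EuclideanSpace ℝ (Fin n))
    (Q : EuclideanSpace ℝ (Fin n) → ℝ) (hQint : IntegrableOn Q V)
    (hQpos : ∀ v ∈ V, 0 < Q v) (H : ℝ)
    (heig : ∀ᵐ v ∂(volume.restrict V),
      H * Q v = (⟪v, p⟫ - 1) * Q v + ∫ v' in V, M v' * Q v')
    (hpos : 0 < ∫ v' in V, M v' * Q v') :
    μ p - 1 ≤ H := by
  by_contra hlt
  push_neg at hlt
  have hVm : MeasurableSet V := hVc.measurableSet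
  have hcont : Continuous fun v : EuclideanSpace ℝ (Fin n) => ⟪v, p⟫ :=
    continuous_id.inner continuous_const
  -- a.e. on V, ⟪v,p⟫ < H + 1
  have hae : ∀ᵐ v ∂(volume.restrict V), ⟪v, p⟫ < H + 1 := by
    filter_upwards [heig, ae_restrict_mem hVm] with v hv hvV
    have hQ := hQpos v hvV
    nlinarith [hpos, hQ]
  -- max over V dominates μ p
  obtain ⟨v0, hv0V, hv0max⟩ := hVc.exists_isMaxOn hVne hcont.continuousOn
  have lin : IsLinearMap ℝ fun v : EuclideanSpace ℝ (Fin n) => ⟪v, p⟫ :=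
    ⟨fun a b => inner_add_left a b p, fun c a => real_inner_smul_left a p c⟩
  have hsub : convexHull ℝ V ⊆ {w | ⟪w, p⟫ ≤ ⟪v0, p⟫} :=
    convexHull_min (fun w hw => hv0max hw) (convex_halfSpace_le lin _)
  obtain ⟨x, hx, hxe⟩ := (hμ p).1
  have hμle : μ p ≤ ⟪v0, p⟫ := hxe ▸ hsub hx
  -- the open set where ⟪v,p⟫ > H+1 meets V
  set U : Set (EuclideanSpace ℝ (Fin n)) := {v | H + 1 < ⟪v, p⟫} with hU
  have hUopen : IsOpen U := isOpen_lt continuous_const hcont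
  have hUne : (U ∩ V).Nonempty := by
    refine ⟨v0, ?_, hv0V⟩
    simp only [hU, mem_setOf_eq]
    linarith
  have hvol : 0 < volume (U ∩ V) := hess U hUopen hUne
  -- but U has restrict-measure zero
  have hzero : (volume.restrict V) {v | ¬ ⟪v, p⟫ < H + 1} = 0 := by
    exact ae_iff.mp hae
  have hle : (volume.restrict V) U ≤ (volume.restrict V) {v | ¬ ⟪v, p⟫ < H + 1} :=
    measure_mono fun v hv => by simp only [hU, mem_setOf_eq] at hv ⊢; linarith
  rw [hzero] at hle
  have : (volume.restrict V) U = volume (U ∩ V) :=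
    Measure.restrict_apply (hUopen.measurableSet)
  rw [this] at hle
  exact absurd (le_antisymm hle zero_le) (ne_of_gt hvol)
end

section
/- The hamiltonian H is continuous on ℝⁿ, where H(p) is defined as μ(p) − 1 for p ∈ Sing(M) and as the unique solution of ∫_V M(v)/(1 + H(p) − v·p) dv = 1 for p ∉ Sing(M). -/
open MeasureTheory Set
open scoped RealInnerProductSpace ENNReal
set_option maxHeartbeats 1000000

variable {n : ℕ} {V : Set (EuclideanSpace ℝ (Fin n))} {M : EuclideanSpace ℝ (Fin n) → ℝ}
  {μ : EuclideanSpace ℝ (Fin n) → ℝ} {p : EuclideanSpace ℝ (Fin n)} {a b h : ℝ}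

lemma le_mu (hμ : ∀ p, IsGreatest ((fun v => ⟪v, p⟫) '' convexHull ℝ V) (μ p))
    {v : EuclideanSpace ℝ (Fin n)} (hv : v ∈ V) (p) : ⟪v, p⟫ ≤ μ p :=
  (hμ p).2 ⟨v, subset_convexHull ℝ V hv, rfl⟩

lemma mu_cont (hVc : IsCompact V)
    (hμ : ∀ p, IsGreatest ((fun v => ⟪v, p⟫) '' convexHull ℝ V) (μ p)) : Continuous μ := by
  obtain ⟨R, hR⟩ := (isBounded_convexHull.2 hVc.isBounded).exists_norm_le
    (s := convexHull ℝ V)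
  have key : ∀ p q, μ p ≤ μ q + R * ‖p - q‖ := by
    intro p q
    obtain ⟨v, hv, hvp⟩ := (hμ p).1
    simp only at hvp
    have h1 : ⟪v, q⟫ ≤ μ q := (hμ q).2 ⟨v, hv, rfl⟩
    have h2 : ⟪v, p - q⟫ ≤ R * ‖p - q‖ := by
      calc ⟪v, p - q⟫ ≤ ‖v‖ * ‖p - q‖ := real_inner_le_norm _ _
        _ ≤ R * ‖p - q‖ := by nlinarith [hR v hv, norm_nonneg (p - q)]
    have h3 : ⟪v, p⟫ = ⟪v, q⟫ + ⟪v, p - q⟫ := by rw [inner_sub_right]; ring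
    rw [← hvp, h3]; linarith
  have : LipschitzWith (Real.toNNReal R) μ := by
    apply LipschitzWith.of_dist_le_mul
    intro p q
    rw [Real.dist_eq, abs_sub_le_iff]
    have hc : (Real.toNNReal R : ℝ) = max R 0 := Real.coe_toNNReal' R
    have hd : dist p q = ‖p - q‖ := dist_eq_norm p q
    have hd' : dist q p = ‖q - p‖ := dist_eq_norm q p
    have hmax : R * ‖p - q‖ ≤ max R 0 * ‖p - q‖ :=
      mul_le_mul_of_nonneg_right (le_max_left _ _) (norm_nonneg _)
    have hmax' : R * ‖q - p‖ ≤ max R 0 * ‖q - p‖ :=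
      mul_le_mul_of_nonneg_right (le_max_left _ _) (norm_nonneg _)
    have hnorm : ‖q - p‖ = ‖p - q‖ := norm_sub_rev q p
    constructor
    · have := key p q; rw [hc, hd]; linarith
    · have hk := key q p; rw [hnorm] at hk; rw [hc, hd]; linarith
  exact this.continuous

lemma F_intg (hVc : IsCompact V) (hM0 : ∀ v, 0 ≤ M v) (hMint : IntegrableOn M V)
    (hμ : ∀ p, IsGreatest ((fun v => ⟪v, p⟫) '' convexHull ℝ V) (μ p))
    (hh : μ p - 1 < h) :
    IntegrableOn (fun v => M v / (1 + h - ⟪v, p⟫)) V := by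
  have hδ : (0:ℝ) < 1 + h - μ p := by linarith
  have hmeas : AEStronglyMeasurable (fun v => M v / (1 + h - ⟪v, p⟫))
      (volume.restrict V) := by
    have hc : Continuous fun v : EuclideanSpace ℝ (Fin n) => 1 + h - ⟪v, p⟫ :=
      continuous_const.sub (continuous_id.inner continuous_const)
    have h2 : AEStronglyMeasurable (fun v : EuclideanSpace ℝ (Fin n) => (1 + h - ⟪v, p⟫)⁻¹)
        (volume.restrict V) := (hc.measurable.inv).aestronglyMeasurable
    have hm := hMint.aestronglyMeasurable.mul h2
    simp only [div_eq_mul_inv]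
    exact hm
  refine Integrable.mono' (hMint.smul ((1 + h - μ p)⁻¹)) hmeas ?_
  filter_upwards [ae_restrict_mem hVc.isClosed.measurableSet] with v hv
  have hd : (0:ℝ) < 1 + h - ⟪v, p⟫ := by
    have := le_mu hμ hv p; linarith
  have h1 : M v / (1 + h - ⟪v, p⟫) ≤ M v / (1 + h - μ p) := by
    gcongr
    · exact hM0 v
    · exact le_mu hμ hv p
  rw [Real.norm_eq_abs, abs_of_nonneg (div_nonneg (hM0 v) hd.le)]
  calc M v / (1 + h - ⟪v, p⟫) ≤ M v / (1 + h - μ p) := h1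
    _ = (1 + h - μ p)⁻¹ • M v := by rw [smul_eq_mul, div_eq_inv_mul]

lemma F_anti (hVc : IsCompact V) (hM0 : ∀ v, 0 ≤ M v) (hMint : IntegrableOn M V)
    (hμ : ∀ p, IsGreatest ((fun v => ⟪v, p⟫) '' convexHull ℝ V) (μ p))
    (ha : μ p - 1 < a) (hab : a ≤ b) :
    ∫ v in V, M v / (1 + b - ⟪v, p⟫) ≤ ∫ v in V, M v / (1 + a - ⟪v, p⟫) := by
  refine setIntegral_mono_on (F_intg hVc hM0 hMint hμ (by linarith))
    (F_intg hVc hM0 hMint hμ ha) hVc.isClosed.measurableSet ?_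
  intro v hv
  have := le_mu hμ hv p
  gcongr
  · exact hM0 v
  · linarith

lemma F_strict (hVc : IsCompact V) (hM0 : ∀ v, 0 ≤ M v) (hMint : IntegrableOn M V)
    (hM1 : ∫ v in V, M v = 1)
    (hμ : ∀ p, IsGreatest ((fun v => ⟪v, p⟫) '' convexHull ℝ V) (μ p))
    (ha : μ p - 1 < a) (hab : a < b)
    (heq : ∫ v in V, M v / (1 + b - ⟪v, p⟫) = ∫ v in V, M v / (1 + a - ⟪v, p⟫)) :
    False := by
  have hVm := hVc.isClosed.measurableSet
  set f := fun v : EuclideanSpace ℝ (Fin n) =>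
    M v / (1 + a - ⟪v, p⟫) - M v / (1 + b - ⟪v, p⟫) with hf
  have hia := F_intg hVc hM0 hMint hμ ha (h := a)
  have hib := F_intg hVc hM0 hMint hμ (show μ p - 1 < b by linarith) (h := b)
  have hfi : IntegrableOn f V := hia.sub hib
  have hint : ∫ v in V, f v = 0 := by
    rw [integral_sub hia hib, heq]; ring
  have hnn : 0 ≤ᵐ[volume.restrict V] f := by
    filter_upwards [ae_restrict_mem hVm] with v hv
    have hvp := le_mu hμ hv p
    have hda : (0:ℝ) < 1 + a - ⟪v, p⟫ := by linarith
    have : M v / (1 + b - ⟪v, p⟫) ≤ M v / (1 + a - ⟪v, p⟫) := by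
      gcongr <;> first | exact hM0 v | linarith
    simpa [hf] using sub_nonneg.2 this
  have hz : f =ᵐ[volume.restrict V] 0 :=
    (integral_eq_zero_iff_of_nonneg_ae hnn hfi).1 hint
  have hMz : M =ᵐ[volume.restrict V] 0 := by
    filter_upwards [hz, ae_restrict_mem hVm] with v hv0 hv
    have hvp := le_mu hμ hv p
    have hda : (0:ℝ) < 1 + a - ⟪v, p⟫ := by linarith
    have hdb : (0:ℝ) < 1 + b - ⟪v, p⟫ := by linarith
    by_contra hM
    have hMpos : 0 < M v := lt_of_le_of_ne (hM0 v) (Ne.symm hM)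
    have : M v / (1 + b - ⟪v, p⟫) < M v / (1 + a - ⟪v, p⟫) :=
      div_lt_div_of_pos_left hMpos hda (by linarith)
    have : f v ≠ 0 := by simp only [hf]; intro hc; rw [sub_eq_zero] at hc; linarith [hc]
    exact this hv0
  have : ∫ v in V, M v = 0 := by
    rw [integral_congr_ae hMz]; simp
  rw [hM1] at this; norm_num at this

lemma F_tendsto (hVc : IsCompact V) (hM0 : ∀ v, 0 ≤ M v) (hMint : IntegrableOn M V)
    (hμ : ∀ p, IsGreatest ((fun v => ⟪v, p⟫) '' convexHull ℝ V) (μ p))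
    (hcμ : Continuous μ) {p₀ : EuclideanSpace ℝ (Fin n)} (hh : μ p₀ - 1 < h) :
    Filter.Tendsto (fun p => ∫ v in V, M v / (1 + h - ⟪v, p⟫)) (nhds p₀)
      (nhds (∫ v in V, M v / (1 + h - ⟪v, p₀⟫))) := by
  have hVm := hVc.isClosed.measurableSet
  set δ := 1 + h - μ p₀ with hδdef
  have hδ : (0:ℝ) < δ := by simp [hδdef]; linarith
  have hU : ∀ᶠ p in nhds p₀, μ p < μ p₀ + δ/2 :=
    (hcμ.tendsto p₀).eventually (Filter.Tendsto.eventually_lt_const (by linarith) Filter.tendsto_id)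
  refine tendsto_integral_filter_of_dominated_convergence
    (fun v => (δ/2)⁻¹ * M v) ?_ ?_ (hMint.const_mul _) ?_
  · filter_upwards with p
    have hc : Continuous fun v : EuclideanSpace ℝ (Fin n) => 1 + h - ⟪v, p⟫ :=
      continuous_const.sub (continuous_id.inner continuous_const)
    have h2 : AEStronglyMeasurable (fun v : EuclideanSpace ℝ (Fin n) => (1 + h - ⟪v, p⟫)⁻¹)
        (volume.restrict V) := (hc.measurable.inv).aestronglyMeasurable
    have hm := hMint.aestronglyMeasurable.mul h2
    simp only [div_eq_mul_inv]
    exact hm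
  · filter_upwards [hU] with p hp
    filter_upwards [ae_restrict_mem hVm] with v hv
    have hvp := le_mu hμ hv p
    have hd : δ/2 < 1 + h - ⟪v, p⟫ := by simp only [hδdef] at *; linarith
    rw [Real.norm_eq_abs, abs_of_nonneg (div_nonneg (hM0 v) (by linarith))]
    calc M v / (1 + h - ⟪v, p⟫) ≤ M v / (δ/2) := by
          gcongr <;> first | exact hM0 v | linarith
      _ = (δ/2)⁻¹ * M v := div_eq_inv_mul _ _
  · filter_upwards [ae_restrict_mem hVm] with v hv
    have hvp := le_mu hμ hv p₀
    have hd : (0:ℝ) < 1 + h - ⟪v, p₀⟫ := by simp only [hδdef] at hδ; linarith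
    have hc : Continuous fun p : EuclideanSpace ℝ (Fin n) => 1 + h - ⟪v, p⟫ :=
      continuous_const.sub (continuous_const.inner continuous_id)
    exact Filter.Tendsto.div tendsto_const_nhds (hc.tendsto p₀) hd.ne'

lemma lint_le (hVc : IsCompact V) (hM0 : ∀ v, 0 ≤ M v)
    (hμ : ∀ p, IsGreatest ((fun v => ⟪v, p⟫) '' convexHull ℝ V) (μ p))
    (hh : μ p - 1 < h) :
    ∫⁻ v in V, ENNReal.ofReal (M v / (1 + h - ⟪v, p⟫)) ≤
      ∫⁻ v in V, ENNReal.ofReal (M v) / ENNReal.ofReal (μ p - ⟪v, p⟫) := by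
  refine lintegral_mono_ae ?_
  filter_upwards [ae_restrict_mem hVc.isClosed.measurableSet] with v hv
  have hvp := le_mu hμ hv p
  have hd : (0:ℝ) < 1 + h - ⟪v, p⟫ := by linarith
  rw [ENNReal.ofReal_div_of_pos hd]
  exact ENNReal.div_le_div_left (ENNReal.ofReal_le_ofReal (by linarith)) _

lemma int_le_one (hVc : IsCompact V) (hM0 : ∀ v, 0 ≤ M v) (hMint : IntegrableOn M V)
    (hμ : ∀ p, IsGreatest ((fun v => ⟪v, p⟫) '' convexHull ℝ V) (μ p))
    (hs : ∫⁻ v in V, ENNReal.ofReal (M v) / ENNReal.ofReal (μ p - ⟪v, p⟫) ≤ 1)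
    (hh : μ p - 1 < h) :
    ∫ v in V, M v / (1 + h - ⟪v, p⟫) ≤ 1 := by
  have hgi := F_intg hVc hM0 hMint hμ hh
  have hnn : 0 ≤ᵐ[volume.restrict V] fun v => M v / (1 + h - ⟪v, p⟫) := by
    filter_upwards [ae_restrict_mem hVc.isClosed.measurableSet] with v hv
    have hvp := le_mu hμ hv p
    exact div_nonneg (hM0 v) (by linarith)
  have hofr := ofReal_integral_eq_lintegral_ofReal hgi hnn
  have : ENNReal.ofReal (∫ v in V, M v / (1 + h - ⟪v, p⟫)) ≤ 1 :=
    hofr ▸ le_trans (lint_le hVc hM0 hμ hh) hs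
  exact ENNReal.ofReal_le_one.1 this

lemma sing_lt_one (hVc : IsCompact V) (hM0 : ∀ v, 0 ≤ M v) (hMint : IntegrableOn M V)
    (hM1 : ∫ v in V, M v = 1)
    (hμ : ∀ p, IsGreatest ((fun v => ⟪v, p⟫) '' convexHull ℝ V) (μ p))
    (hs : ∫⁻ v in V, ENNReal.ofReal (M v) / ENNReal.ofReal (μ p - ⟪v, p⟫) ≤ 1)
    {ε : ℝ} (hε : 0 < ε) :
    ∫ v in V, M v / (1 + (μ p - 1 + ε) - ⟪v, p⟫) < 1 := by
  by_contra hcon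
  push_neg at hcon
  have h1 := int_le_one hVc hM0 hMint hμ hs (show μ p - 1 < μ p - 1 + ε by linarith)
  have h2 := int_le_one hVc hM0 hMint hμ hs (show μ p - 1 < μ p - 1 + ε/2 by linarith)
  have h3 := F_anti hVc hM0 hMint hμ (show μ p - 1 < μ p - 1 + ε/2 by linarith)
    (show μ p - 1 + ε/2 ≤ μ p - 1 + ε by linarith)
  exact F_strict hVc hM0 hMint hM1 hμ (show μ p - 1 < μ p - 1 + ε/2 by linarith)
    (show μ p - 1 + ε/2 < μ p - 1 + ε by linarith) (by linarith)

lemma not_sing (hVc : IsCompact V) (hM0 : ∀ v, 0 ≤ M v) (hMint : IntegrableOn M V)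
    (hμ : ∀ p, IsGreatest ((fun v => ⟪v, p⟫) '' convexHull ℝ V) (μ p))
    (hh : μ p - 1 < h) (hgt : 1 < ∫ v in V, M v / (1 + h - ⟪v, p⟫)) :
    ¬ (∫⁻ v in V, ENNReal.ofReal (M v) / ENNReal.ofReal (μ p - ⟪v, p⟫) ≤ 1) := by
  have hgi := F_intg hVc hM0 hMint hμ hh
  have hnn : 0 ≤ᵐ[volume.restrict V] fun v => M v / (1 + h - ⟪v, p⟫) := by
    filter_upwards [ae_restrict_mem hVc.isClosed.measurableSet] with v hv
    have hvp := le_mu hμ hv p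
    exact div_nonneg (hM0 v) (by linarith)
  have hofr := ofReal_integral_eq_lintegral_ofReal hgi hnn
  intro hle
  have : ENNReal.ofReal (∫ v in V, M v / (1 + h - ⟪v, p⟫)) ≤ 1 :=
    hofr ▸ le_trans (lint_le hVc hM0 hμ hh) hle
  exact absurd (ENNReal.ofReal_le_one.1 this) (not_le.2 hgt)

/-- The hamiltonian H, equal to μ(p) − 1 on Sing(M) and defined on Sing(M)ᶜ by
∫_V M(v)/(1 + H(p) − v·p) dv = 1 with H(p) > μ(p) − 1, is continuous on ℝⁿ. -/
theorem stmt_12 {n : ℕ} (V : Set (EuclideanSpace ℝ (Fin n)))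
    (hVc : IsCompact V) (hVne : V.Nonempty)
    (h0 : (0 : EuclideanSpace ℝ (Fin n)) ∈ interior (convexHull ℝ V))
    (M : EuclideanSpace ℝ (Fin n) → ℝ)
    (hM0 : ∀ v, 0 ≤ M v) (hMsupp : Function.support M ⊆ V)
    (hMint : IntegrableOn M V) (hM1 : ∫ v in V, M v = 1)
    (μ : EuclideanSpace ℝ (Fin n) → ℝ)
    (hμ : ∀ p, IsGreatest ((fun v => ⟪v, p⟫) '' convexHull ℝ V) (μ p))
    (Sing : Set (EuclideanSpace ℝ (Fin n)))
    (hSing : Sing = {p : EuclideanSpace ℝ (Fin n) |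
      ∫⁻ v in V, ENNReal.ofReal (M v) / ENNReal.ofReal (μ p - ⟪v, p⟫) ≤ 1})
    (H : EuclideanSpace ℝ (Fin n) → ℝ)
    (hHsing : ∀ p ∈ Sing, H p = μ p - 1)
    (hHreg : ∀ p ∉ Sing, μ p - 1 < H p ∧ ∫ v in V, M v / (1 + H p - ⟪v, p⟫) = 1) :
    Continuous H := by
  have hcμ : Continuous μ := mu_cont hVc hμ
  rw [continuous_iff_continuousAt]
  intro p₀
  rw [ContinuousAt, Metric.tendsto_nhds]
  intro ε hε
  have hlowH : ∀ p, μ p - 1 ≤ H p := by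
    intro p
    by_cases hp : p ∈ Sing
    · rw [hHsing p hp]
    · exact (hHreg p hp).1.le
  by_cases hp₀ : p₀ ∈ Sing
  · -- singular case
    have hH₀ : H p₀ = μ p₀ - 1 := hHsing p₀ hp₀
    have hs₀ : ∫⁻ v in V, ENNReal.ofReal (M v) / ENNReal.ofReal (μ p₀ - ⟪v, p₀⟫) ≤ 1 := by
      rw [hSing] at hp₀; exact hp₀
    set b := μ p₀ - 1 + ε/2 with hbdef
    have hFb : ∫ v in V, M v / (1 + b - ⟪v, p₀⟫) < 1 :=
      sing_lt_one hVc hM0 hMint hM1 hμ hs₀ (half_pos hε)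
    have h1 : ∀ᶠ p in nhds p₀, μ p₀ - ε/2 < μ p :=
      (hcμ.tendsto p₀).eventually_const_lt (by linarith)
    have h2 : ∀ᶠ p in nhds p₀, μ p < μ p₀ + ε/2 :=
      (hcμ.tendsto p₀).eventually_lt_const (by linarith)
    have h3 : ∀ᶠ p in nhds p₀, ∫ v in V, M v / (1 + b - ⟪v, p⟫) < 1 :=
      (F_tendsto hVc hM0 hMint hμ hcμ (show μ p₀ - 1 < b by rw [hbdef]; linarith)).eventually_lt_const hFb
    filter_upwards [h1, h2, h3] with p hp1 hp2 hp3
    rw [Real.dist_eq, abs_sub_lt_iff]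
    constructor
    · -- H p - H p₀ < ε
      by_cases hp : p ∈ Sing
      · rw [hHsing p hp, hH₀]; linarith
      · obtain ⟨hgt, heqp⟩ := hHreg p hp
        by_contra hcon
        push_neg at hcon
        have hb : μ p - 1 < b := by rw [hbdef]; linarith
        have hble : b ≤ H p := by rw [hbdef]; linarith [hH₀ ▸ hcon]
        have := F_anti hVc hM0 hMint hμ hb hble
        rw [heqp] at this
        linarith
    · -- H p₀ - H p < ε
      have := hlowH p
      rw [hH₀]; linarith
  · -- regular case
    obtain ⟨hgt₀, heq₀⟩ := hHreg p₀ hp₀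
    set ε1 := min (ε/2) ((H p₀ - (μ p₀ - 1))/2) with hε1def
    have hε1 : 0 < ε1 := lt_min (half_pos hε) (by linarith)
    set a := H p₀ - ε1 with hadef
    set b := H p₀ + ε/2 with hbdef
    have haμ : μ p₀ - 1 < a := by
      have : ε1 ≤ (H p₀ - (μ p₀ - 1))/2 := min_le_right _ _
      rw [hadef]; linarith
    have hbμ : μ p₀ - 1 < b := by rw [hbdef]; linarith
    have hFa : 1 < ∫ v in V, M v / (1 + a - ⟪v, p₀⟫) := by
      have hle := F_anti hVc hM0 hMint hμ haμ (show a ≤ H p₀ by rw [hadef]; linarith)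
      rw [heq₀] at hle
      rcases lt_or_eq_of_le hle with hlt | heqq
      · exact hlt
      · exfalso
        refine F_strict hVc hM0 hMint hM1 hμ haμ (show a < H p₀ by rw [hadef]; linarith) ?_
        rw [heq₀, ← heqq]
    have hFb : ∫ v in V, M v / (1 + b - ⟪v, p₀⟫) < 1 := by
      have hle := F_anti hVc hM0 hMint hμ hgt₀ (show H p₀ ≤ b by rw [hbdef]; linarith)
      rw [heq₀] at hle
      rcases lt_or_eq_of_le hle with hlt | heqq
      · exact hlt
      · exfalso
        refine F_strict hVc hM0 hMint hM1 hμ hgt₀ (show H p₀ < b by rw [hbdef]; linarith) ?_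
        rw [heq₀, heqq]
    have h1 : ∀ᶠ p in nhds p₀, μ p < a + 1 :=
      (hcμ.tendsto p₀).eventually_lt_const (by linarith)
    have h3 : ∀ᶠ p in nhds p₀, 1 < ∫ v in V, M v / (1 + a - ⟪v, p⟫) :=
      (F_tendsto hVc hM0 hMint hμ hcμ haμ).eventually_const_lt hFa
    have h4 : ∀ᶠ p in nhds p₀, ∫ v in V, M v / (1 + b - ⟪v, p⟫) < 1 :=
      (F_tendsto hVc hM0 hMint hμ hcμ hbμ).eventually_lt_const hFb
    filter_upwards [h1, h3, h4] with p hp1 hp3 hp4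
    have hpa : μ p - 1 < a := by linarith
    have hpn : p ∉ Sing := by
      rw [hSing]
      exact not_sing hVc hM0 hMint hμ hpa hp3
    obtain ⟨hgt, heqp⟩ := hHreg p hpn
    rw [Real.dist_eq, abs_sub_lt_iff]
    constructor
    · -- H p - H p₀ < ε
      by_contra hcon
      push_neg at hcon
      have hble : b ≤ H p := by rw [hbdef]; linarith
      have haH : a < H p₀ := by rw [hadef]; linarith
      have hμpb : μ p - 1 < b := by rw [hbdef]; linarith
      have := F_anti hVc hM0 hMint hμ hμpb hble
      rw [heqp] at this
      linarith
    · -- H p₀ - H p < ε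
      by_contra hcon
      push_neg at hcon
      have hale : H p ≤ a := by
        have : ε1 ≤ ε/2 := min_le_left _ _
        rw [hadef]; linarith
      have := F_anti hVc hM0 hMint hμ hgt hale
      rw [heqp] at this
      linarith
end

section
/- The hamiltonian H is convex on ℝⁿ; in particular H(p) = max( sup{ ∇H(q)·(p−q) + H(q) : q ∈ Sing(M)ᶜ }, μ(p) − 1 ) for all p ∈ ℝⁿ. -/
open MeasureTheory Set
open scoped RealInnerProductSpace ENNReal

lemma aux_real_stmt13 {a b t s c : ℝ} (hc : 0 ≤ c) (ht : 0 < t) (hs : 0 < s) (hts : t + s = 1)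
    (ha : 0 < a) (hb : 0 < b) : c / (t*a+s*b) ≤ t*(c/a)+s*(c/b) := by
  rw [div_le_iff₀ (by positivity)]
  have h1 : t*(c/a)+s*(c/b) = c*(t*b+s*a)/(a*b) := by field_simp
  rw [h1, div_mul_eq_mul_div, le_div_iff₀ (by positivity)]
  have hs' : s = 1 - t := by linarith
  subst hs'
  nlinarith [mul_nonneg (mul_nonneg hc (mul_pos ht hs).le) (sq_nonneg (a-b))]

lemma aux_enn_stmt13 {a b t s c : ℝ} (hc : 0 ≤ c) (ht : 0 ≤ t) (hs : 0 ≤ s) (hts : t + s = 1) :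
    ENNReal.ofReal c / ENNReal.ofReal (t*a+s*b) ≤
      ENNReal.ofReal t * (ENNReal.ofReal c / ENNReal.ofReal a)
      + ENNReal.ofReal s * (ENNReal.ofReal c / ENNReal.ofReal b) := by
  rcases eq_or_lt_of_le ht with h | ht
  · have hs1 : s = 1 := by linarith
    simp [← h, hs1]
  rcases eq_or_lt_of_le hs with h | hs
  · have ht1 : t = 1 := by linarith
    simp [← h, ht1]
  rcases eq_or_lt_of_le hc with h | hc
  · simp [← h]
  rcases le_or_gt a 0 with h | ha
  · have : ENNReal.ofReal a = 0 := ENNReal.ofReal_eq_zero.2 h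
    rw [this, ENNReal.div_zero (by simpa using hc), ENNReal.mul_top (by simpa using ht)]
    simp
  rcases le_or_gt b 0 with h | hb
  · have : ENNReal.ofReal b = 0 := ENNReal.ofReal_eq_zero.2 h
    rw [this, ENNReal.div_zero (by simpa using hc), ENNReal.mul_top (by simpa using hs)]
    simp
  rw [← ENNReal.ofReal_div_of_pos (by positivity), ← ENNReal.ofReal_div_of_pos ha,
    ← ENNReal.ofReal_div_of_pos hb, ← ENNReal.ofReal_mul ht.le, ← ENNReal.ofReal_mul hs.le,
    ← ENNReal.ofReal_add (by positivity) (by positivity)]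
  exact ENNReal.ofReal_le_ofReal (aux_real_stmt13 hc.le ht hs hts ha hb)

lemma tangent_aux_stmt13 {n : ℕ} {f : EuclideanSpace ℝ (Fin n) → ℝ} (hf : ConvexOn ℝ Set.univ f)
    {g q : EuclideanSpace ℝ (Fin n)} (hg : HasGradientAt f g q) (p : EuclideanSpace ℝ (Fin n)) :
    ⟪g, p - q⟫ + f q ≤ f p := by
  set φ : ℝ → ℝ := fun t => f (q + t • (p - q)) with hφ
  have hφconv : ConvexOn ℝ Set.univ φ := by
    have := hf.comp_affineMap (AffineMap.lineMap q p : ℝ →ᵃ[ℝ] EuclideanSpace ℝ (Fin n))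
    have heq : (f ∘ (AffineMap.lineMap q p : ℝ →ᵃ[ℝ] EuclideanSpace ℝ (Fin n))) = φ := by
      funext t
      simp [φ, AffineMap.lineMap_apply, add_comm]
    rw [heq] at this
    simpa using this
  have hc : HasDerivAt (fun t : ℝ => q + t • (p - q)) (p - q) (0:ℝ) := by
    simpa using ((hasDerivAt_id (0:ℝ)).smul_const (p - q)).const_add q
  have hφd : HasDerivAt φ ⟪g, p - q⟫ 0 := by
    have h2 : HasFDerivAt f (InnerProductSpace.toDual ℝ _ g) (q + (0:ℝ) • (p - q)) := by
      simpa using hg.hasFDerivAt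
    have := h2.comp_hasDerivAt (0:ℝ) hc
    exact (by simpa [InnerProductSpace.toDual_apply_apply] using this :
      HasDerivAt (f ∘ fun t : ℝ => q + t • (p - q)) ⟪g, p - q⟫ 0)
  have hslope : Filter.Tendsto (slope φ 0) (nhdsWithin 0 (Set.Ioi (0:ℝ))) (nhds ⟪g, p - q⟫) :=
    (hasDerivAt_iff_tendsto_slope.1 hφd).mono_left
      (nhdsWithin_mono 0 (fun x hx => ne_of_gt hx))
  have hkey : ⟪g, p - q⟫ ≤ φ 1 - φ 0 := by
    refine le_of_tendsto hslope ?_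
    filter_upwards [Ioc_mem_nhdsGT_of_mem (Set.left_mem_Ico.2 zero_lt_one)] with t ht
    have := hφconv.secant_mono (a := 0) (x := t) (y := 1) trivial trivial trivial
      (ne_of_gt ht.1) one_ne_zero ht.2
    simpa [slope_def_field] using this
  have h0 : φ 0 = f q := by simp [φ]
  have h1 : φ 1 = f p := by simp [φ]
  rw [h0, h1] at hkey
  linarith

/-- The hamiltonian H is convex on ℝⁿ; in particular
H(p) = max( sup{ ∇H(q)·(p−q) + H(q) : q ∈ Sing(M)ᶜ }, μ(p) − 1 ). -/
theorem stmt_13 {n : ℕ} (V : Set (EuclideanSpace ℝ (Fin n)))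
    (hVc : IsCompact V) (hVne : V.Nonempty)
    (h0 : (0 : EuclideanSpace ℝ (Fin n)) ∈ interior (convexHull ℝ V))
    (M : EuclideanSpace ℝ (Fin n) → ℝ)
    (hM0 : ∀ v, 0 ≤ M v) (hMsupp : Function.support M ⊆ V)
    (hMint : IntegrableOn M V) (hM1 : ∫ v in V, M v = 1)
    (μ : EuclideanSpace ℝ (Fin n) → ℝ)
    (hμ : ∀ p, IsGreatest ((fun v => ⟪v, p⟫) '' convexHull ℝ V) (μ p))
    (Sing : Set (EuclideanSpace ℝ (Fin n)))
    (hSing : Sing = {p : EuclideanSpace ℝ (Fin n) |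
      ∫⁻ v in V, ENNReal.ofReal (M v) / ENNReal.ofReal (μ p - ⟪v, p⟫) ≤ 1})
    (H : EuclideanSpace ℝ (Fin n) → ℝ)
    (hHsing : ∀ p ∈ Sing, H p = μ p - 1)
    (hHreg : ∀ p ∉ Sing, μ p - 1 < H p ∧ ∫ v in V, M v / (1 + H p - ⟪v, p⟫) = 1)
    (G : EuclideanSpace ℝ (Fin n) → EuclideanSpace ℝ (Fin n))
    (hG : ∀ q ∉ Sing, HasGradientAt H (G q) q)
    (hGcont : ContinuousOn G Singᶜ)
    (hconv : ConvexOn ℝ Singᶜ H)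
    (hGid : ∀ q ∉ Sing,
      ∫ v in V, (M v / (1 + H q - ⟪v, q⟫) ^ 2) • (G q - v) = 0) :
    ConvexOn ℝ Set.univ H ∧
    ∀ p : EuclideanSpace ℝ (Fin n),
      H p = max (sSup {x : ℝ | ∃ q ∉ Sing, x = ⟪G q, p - q⟫ + H q}) (μ p - 1) := by
  have hVm : MeasurableSet V := hVc.isClosed.measurableSet
  have hMaes : AEMeasurable M (volume.restrict V) := hMint.1.aemeasurable
  set L : EuclideanSpace ℝ (Fin n) → ℝ → ℝ≥0∞ :=
    fun p h => ∫⁻ v in V, ENNReal.ofReal (M v) / ENNReal.ofReal (1 + h - ⟪v, p⟫) with hLdef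
  have haem : ∀ (p : EuclideanSpace ℝ (Fin n)) (h : ℝ),
      AEMeasurable (fun v => ENNReal.ofReal (M v) / ENNReal.ofReal (1 + h - ⟪v, p⟫))
        (volume.restrict V) := by
    intro p h
    exact hMaes.ennreal_ofReal.div
      ((measurable_const.sub ((Continuous.inner continuous_id continuous_const).measurable)).ennreal_ofReal.aemeasurable)
  have hsub : ∀ v ∈ V, ∀ p : EuclideanSpace ℝ (Fin n), ⟪v, p⟫ ≤ μ p := fun v hv p =>
    (hμ p).2 ⟨v, subset_convexHull ℝ V hv, rfl⟩
  have hμ0 : μ 0 = 0 := by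
    obtain ⟨v, hv, hveq⟩ := (hμ 0).1
    simp only [inner_zero_right] at hveq
    exact hveq.symm
  have hμsub : ∀ (x y : EuclideanSpace ℝ (Fin n)) (t s : ℝ), 0 ≤ t → 0 ≤ s → t + s = 1 →
      μ (t • x + s • y) ≤ t * μ x + s * μ y := by
    intro x y t s ht hs hts
    obtain ⟨v, hv, hveq⟩ := (hμ (t • x + s • y)).1
    have h1 : ⟪v, x⟫ ≤ μ x := (hμ x).2 ⟨v, hv, rfl⟩
    have h2 : ⟪v, y⟫ ≤ μ y := (hμ y).2 ⟨v, hv, rfl⟩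
    simp only [inner_add_right, real_inner_smul_right] at hveq
    rw [← hveq]
    have := mul_le_mul_of_nonneg_left h1 ht
    have := mul_le_mul_of_nonneg_left h2 hs
    linarith
  have hHge : ∀ p, μ p - 1 ≤ H p := by
    intro p
    by_cases hp : p ∈ Sing
    · rw [hHsing p hp]
    · exact (hHreg p hp).1.le
  have hSingL : ∀ p, p ∈ Sing ↔ L p (μ p - 1) ≤ 1 := by
    intro p
    have heq : L p (μ p - 1) = ∫⁻ v in V, ENNReal.ofReal (M v) / ENNReal.ofReal (μ p - ⟪v, p⟫) := by
      apply lintegral_congr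
      intro v
      congr 2
      ring
    rw [hSing, Set.mem_setOf_eq, heq]
  have hLreg : ∀ p ∉ Sing, L p (H p) = 1 := by
    intro p hp
    obtain ⟨hlt, hint⟩ := hHreg p hp
    have hInteg : Integrable (fun v => M v / (1 + H p - ⟪v, p⟫)) (volume.restrict V) := by
      by_contra hni
      rw [integral_undef hni] at hint
      norm_num at hint
    have hnn : 0 ≤ᵐ[volume.restrict V] fun v => M v / (1 + H p - ⟪v, p⟫) := by
      filter_upwards [ae_restrict_mem hVm] with v hv
      have := hsub v hv p
      exact div_nonneg (hM0 v) (by linarith)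
    have hof := ofReal_integral_eq_lintegral_ofReal hInteg hnn
    rw [hint] at hof
    have heq : L p (H p) = ∫⁻ v in V, ENNReal.ofReal (M v / (1 + H p - ⟪v, p⟫)) := by
      apply lintegral_congr_ae
      filter_upwards [ae_restrict_mem hVm] with v hv
      rw [ENNReal.ofReal_div_of_pos (by have := hsub v hv p; linarith)]
    rw [heq, ← hof, ENNReal.ofReal_one]
  have hL1 : ∀ p, L p (H p) ≤ 1 := by
    intro p
    by_cases hp : p ∈ Sing
    · rw [hHsing p hp]
      exact (hSingL p).1 hp
    · exact (hLreg p hp).le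
  have hMzero : ¬ (M =ᵐ[volume.restrict V] (fun _ => (0:ℝ))) := by
    intro hae
    have : ∫ v in V, M v = ∫ v in V, (0:ℝ) := integral_congr_ae hae
    rw [hM1, integral_zero] at this
    norm_num at this
  have hMpos : volume.restrict V {v | 0 < M v} ≠ 0 := by
    intro hz
    apply hMzero
    rw [Filter.EventuallyEq, ae_iff]
    refine measure_mono_null ?_ hz
    intro v hv
    simp only [Set.mem_setOf_eq] at hv ⊢
    exact lt_of_le_of_ne (hM0 v) (Ne.symm hv)
  have h0S : (0 : EuclideanSpace ℝ (Fin n)) ∉ Sing := by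
    intro h0S
    rw [hSing, Set.mem_setOf_eq] at h0S
    have heq : (fun v : EuclideanSpace ℝ (Fin n) =>
        ENNReal.ofReal (M v) / ENNReal.ofReal (μ 0 - ⟪v, (0 : EuclideanSpace ℝ (Fin n))⟫))
        = fun v => ENNReal.ofReal (M v) / 0 := by
      funext v
      rw [inner_zero_right, hμ0]
      norm_num
    rw [lintegral_congr (fun v => congrFun heq v)] at h0S
    have haes : AEMeasurable (fun v => ENNReal.ofReal (M v) / 0) (volume.restrict V) :=
      hMaes.ennreal_ofReal.div aemeasurable_const
    have hltt := ae_lt_top' haes (lt_of_le_of_lt h0S (by norm_num)).ne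
    apply hMzero
    filter_upwards [hltt] with v hv
    by_contra hne
    have hpos : 0 < M v := lt_of_le_of_ne (hM0 v) (Ne.symm hne)
    rw [ENNReal.div_zero (by simpa using hpos)] at hv
    exact absurd hv (lt_irrefl _)
  -- key convexity inequality
  have hkey : ∀ (p₁ p₂ : EuclideanSpace ℝ (Fin n)) (t s : ℝ), 0 ≤ t → 0 ≤ s → t + s = 1 →
      H (t • p₁ + s • p₂) ≤ t * H p₁ + s * H p₂ := by
    intro p₁ p₂ t s ht hs hts
    set p := t • p₁ + s • p₂ with hpdef
    set h₀ := t * H p₁ + s * H p₂ with hh₀def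
    have hμp : μ p - 1 ≤ h₀ := by
      have h1 := hμsub p₁ p₂ t s ht hs hts
      have h2 := hHge p₁
      have h3 := hHge p₂
      have := mul_le_mul_of_nonneg_left (by linarith : μ p₁ ≤ H p₁ + 1) ht
      have := mul_le_mul_of_nonneg_left (by linarith : μ p₂ ≤ H p₂ + 1) hs
      have hmul : t * (H p₁ + 1) + s * (H p₂ + 1) = h₀ + 1 := by rw [hh₀def]; ring_nf; linarith
      nlinarith
    have hLmid : L p h₀ ≤ 1 := by
      have hpt : ∀ v : EuclideanSpace ℝ (Fin n),
          ENNReal.ofReal (M v) / ENNReal.ofReal (1 + h₀ - ⟪v, p⟫) ≤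
          ENNReal.ofReal t * (ENNReal.ofReal (M v) / ENNReal.ofReal (1 + H p₁ - ⟪v, p₁⟫))
          + ENNReal.ofReal s * (ENNReal.ofReal (M v) / ENNReal.ofReal (1 + H p₂ - ⟪v, p₂⟫)) := by
        intro v
        have harg : 1 + h₀ - ⟪v, p⟫
            = t * (1 + H p₁ - ⟪v, p₁⟫) + s * (1 + H p₂ - ⟪v, p₂⟫) := by
          rw [hpdef, hh₀def, inner_add_right, real_inner_smul_right, real_inner_smul_right]
          linear_combination -hts
        rw [harg]
        exact aux_enn_stmt13 (hM0 v) ht hs hts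
      calc L p h₀ ≤ ∫⁻ v in V,
            (ENNReal.ofReal t * (ENNReal.ofReal (M v) / ENNReal.ofReal (1 + H p₁ - ⟪v, p₁⟫))
            + ENNReal.ofReal s * (ENNReal.ofReal (M v) / ENNReal.ofReal (1 + H p₂ - ⟪v, p₂⟫))) :=
              lintegral_mono hpt
        _ = ENNReal.ofReal t * L p₁ (H p₁) + ENNReal.ofReal s * L p₂ (H p₂) := by
              rw [lintegral_add_left' ((haem p₁ (H p₁)).const_mul _),
                lintegral_const_mul' _ _ ENNReal.ofReal_ne_top,
                lintegral_const_mul' _ _ ENNReal.ofReal_ne_top]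
        _ ≤ ENNReal.ofReal t * 1 + ENNReal.ofReal s * 1 := by
              gcongr
              · exact hL1 p₁
              · exact hL1 p₂
        _ = 1 := by
              rw [mul_one, mul_one, ← ENNReal.ofReal_add ht hs, hts, ENNReal.ofReal_one]
    by_cases hp : p ∈ Sing
    · rw [hHsing p hp]
      exact hμp
    · by_contra hcon
      push_neg at hcon
      have h1 : L p (H p) = 1 := hLreg p hp
      have hglt := (hHreg p hp).1
      have hstrict : L p (H p) < L p h₀ := by
        apply lintegral_strict_mono_of_ae_le_of_ae_lt_on (haem p h₀)
          (by change L p (H p) ≠ ⊤; rw [h1]; exact ENNReal.one_ne_top) ?_ hMpos ?_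
        · apply Filter.Eventually.of_forall
          intro v
          exact ENNReal.div_le_div_left
            (ENNReal.ofReal_le_ofReal (by linarith : 1 + h₀ - ⟪v, p⟫ ≤ 1 + H p - ⟪v, p⟫)) _
        · filter_upwards [ae_restrict_mem hVm] with v hv hMv
          have hx : ⟪v, p⟫ ≤ μ p := hsub v hv p
          have hd2 : 0 < 1 + H p - ⟪v, p⟫ := by linarith
          have hflt : ENNReal.ofReal (M v) / ENNReal.ofReal (1 + H p - ⟪v, p⟫) < ⊤ :=
            ENNReal.div_lt_top ENNReal.ofReal_ne_top (ENNReal.ofReal_pos.2 hd2).ne'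
          rcases le_or_gt (1 + h₀ - ⟪v, p⟫) 0 with hd1 | hd1
          · rw [ENNReal.ofReal_eq_zero.2 hd1, ENNReal.div_zero (by simpa using hMv)]
            exact hflt
          · rw [div_eq_mul_inv, div_eq_mul_inv]
            exact ENNReal.mul_right_strictMono (by simpa using hMv) ENNReal.ofReal_ne_top
              (ENNReal.inv_lt_inv' (ENNReal.ofReal_lt_ofReal_iff hd2 |>.2 (by linarith)))
      rw [h1] at hstrict
      exact absurd hLmid (not_le.2 hstrict)
  have hHconv : ConvexOn ℝ Set.univ H :=
    ⟨convex_univ, fun x _ y _ a b ha hb hab => by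
      simpa [smul_eq_mul] using hkey x y a b ha hb hab⟩
  refine ⟨hHconv, ?_⟩
  intro p
  set S : Set ℝ := {x : ℝ | ∃ q ∉ Sing, x = ⟪G q, p - q⟫ + H q} with hSdef
  have htan : ∀ x ∈ S, x ≤ H p := by
    rintro x ⟨q, hq, rfl⟩
    exact tangent_aux_stmt13 hHconv (hG q hq) p
  have hSne : S.Nonempty := ⟨⟪G 0, p - 0⟫ + H 0, 0, h0S, rfl⟩
  have hsup_le : sSup S ≤ H p := csSup_le hSne htan
  by_cases hp : p ∈ Sing
  · rw [hHsing p hp, max_eq_right]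
    rw [← hHsing p hp]
    exact hsup_le
  · have hmem : H p ∈ S := ⟨p, hp, by simp⟩
    have hle : H p ≤ sSup S := le_csSup ⟨H p, htan⟩ hmem
    rw [max_eq_left (by linarith [(hHreg p hp).1])]
    exact le_antisymm hle hsup_le
end
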